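/- Let n ≥ 1, let λ be symmetric nonnegative real edge weights on the complete graph with vertex set {1,…,n}, and let B > 0 be a real number such that Σ_{k ≠ j} λ_{jk} ≤ B for every vertex j (every weighted row sum is at most B). If x_1,…,x_n are complex numbers with |x_i| > 2√B for every i, then for every vertex i one has μ_{G∖i} ≠ 0 and | μ_G / μ_{G∖i} | > √B; in particular μ_G ≠ 0. -/

import Mathlib

open Finset Classical

/-- A matching of the complete graph induced on the vertex set `S ⊆ Fin n`,
represented as a finset of ordered pairs `(j, k)` with `j < k` (each such pair
encoding the unordered edge `{j, k}`), no two of which share a vertex. -/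
def IsMatching (n : ℕ) (S : Finset (Fin n)) (M : Finset (Fin n × Fin n)) : Prop :=
  (∀ p ∈ M, p.1 < p.2 ∧ p.1 ∈ S ∧ p.2 ∈ S) ∧
  ∀ p ∈ M, ∀ q ∈ M, p ≠ q → p.1 ≠ q.1 ∧ p.1 ≠ q.2 ∧ p.2 ≠ q.1 ∧ p.2 ≠ q.2

/-- The matching polynomial of the complete graph induced on `S ⊆ Fin n`, with
edge weights `lam` and vertex variables `x`:
`μ_S = Σ_{M matching of S} (Π_{i ∈ S not covered by M} x i) · (Π_{{j,k} ∈ M} lam j k)`. -/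
noncomputable def mu (n : ℕ) (lam : Fin n → Fin n → ℝ) (x : Fin n → ℂ)
    (S : Finset (Fin n)) : ℂ :=
  ∑ M ∈ univ.filter (fun M : Finset (Fin n × Fin n) => IsMatching n S M),
    (∏ v ∈ S.filter (fun v => ∀ p ∈ M, v ≠ p.1 ∧ v ≠ p.2), x v) *
    ∏ p ∈ M, (lam p.1 p.2 : ℂ)

variable {n : ℕ}

def pr (i k : Fin n) : Fin n × Fin n := if i < k then (i, k) else (k, i)

lemma pr_lt {i k : Fin n} (h : i ≠ k) : (pr i k).1 < (pr i k).2 := by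
  unfold pr; split
  · simpa using ‹i < k›
  · simpa using lt_of_le_of_ne (not_lt.mp ‹¬ i < k›) h.symm

lemma pr_cases (i k : Fin n) : (pr i k) = (i, k) ∨ (pr i k) = (k, i) := by
  unfold pr; split
  · simp
  · simp

lemma pr_ne {i k v : Fin n} : (v ≠ (pr i k).1 ∧ v ≠ (pr i k).2) ↔ (v ≠ i ∧ v ≠ k) := by
  rcases pr_cases i k with h | h <;> rw [h] <;> constructor <;> simp <;> tauto

lemma pr_lam (lam : Fin n → Fin n → ℝ) (hsymm : ∀ j k, lam j k = lam k j) (i k : Fin n) :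
    lam (pr i k).1 (pr i k).2 = lam i k := by
  rcases pr_cases i k with h | h <;> simp [h, hsymm k i]

lemma isMatching_erase_iff {S : Finset (Fin n)} {i : Fin n} (hi : i ∈ S)
    (M : Finset (Fin n × Fin n)) :
    (IsMatching n S M ∧ ∀ p ∈ M, i ≠ p.1 ∧ i ≠ p.2) ↔ IsMatching n (S.erase i) M := by
  constructor
  · rintro ⟨⟨h1, h2⟩, h3⟩
    refine ⟨fun p hp => ⟨(h1 p hp).1, ?_, ?_⟩, h2⟩
    · exact Finset.mem_erase.mpr ⟨((h3 p hp).1).symm, (h1 p hp).2.1⟩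
    · exact Finset.mem_erase.mpr ⟨((h3 p hp).2).symm, (h1 p hp).2.2⟩
  · rintro ⟨h1, h2⟩
    refine ⟨⟨fun p hp => ⟨(h1 p hp).1, Finset.mem_of_mem_erase (h1 p hp).2.1,
      Finset.mem_of_mem_erase (h1 p hp).2.2⟩, h2⟩, fun p hp => ?_⟩
    exact ⟨(Finset.ne_of_mem_erase (h1 p hp).2.1).symm, (Finset.ne_of_mem_erase (h1 p hp).2.2).symm⟩

lemma mu_rec (lam : Fin n → Fin n → ℝ) (hsymm : ∀ j k, lam j k = lam k j)
    (x : Fin n → ℂ) {S : Finset (Fin n)} {i : Fin n} (hi : i ∈ S) :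
    mu n lam x S = x i * mu n lam x (S.erase i)
      + ∑ k ∈ S.erase i, (lam i k : ℂ) * mu n lam x ((S.erase i).erase k) := by
  classical
  set f : Finset (Fin n × Fin n) → ℂ := fun M =>
    (∏ v ∈ S.filter (fun v => ∀ p ∈ M, v ≠ p.1 ∧ v ≠ p.2), x v) * ∏ p ∈ M, (lam p.1 p.2 : ℂ)
    with hf
  have hsplit : mu n lam x S
      = (∑ M ∈ (univ.filter (fun M => IsMatching n S M)).filter
            (fun M => ∀ p ∈ M, i ≠ p.1 ∧ i ≠ p.2), f M)
        + ∑ M ∈ (univ.filter (fun M => IsMatching n S M)).filter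
            (fun M => ¬ ∀ p ∈ M, i ≠ p.1 ∧ i ≠ p.2), f M := by
    rw [Finset.sum_filter_add_sum_filter_not]
    rfl
  have hpart1 : (∑ M ∈ (univ.filter (fun M => IsMatching n S M)).filter
            (fun M => ∀ p ∈ M, i ≠ p.1 ∧ i ≠ p.2), f M)
      = x i * mu n lam x (S.erase i) := by
    have hset1 : (univ.filter (fun M => IsMatching n S M)).filter
            (fun M => ∀ p ∈ M, i ≠ p.1 ∧ i ≠ p.2)
        = univ.filter (fun M : Finset (Fin n × Fin n) => IsMatching n (S.erase i) M) := by
      ext M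
      simp only [mem_filter, mem_univ, true_and]
      exact isMatching_erase_iff hi M
    rw [hset1, mu, Finset.mul_sum]
    refine Finset.sum_congr rfl fun M hM => ?_
    simp only [mem_filter, mem_univ, true_and] at hM
    have h := (isMatching_erase_iff hi M).mpr hM
    have hset : S.filter (fun v => ∀ p ∈ M, v ≠ p.1 ∧ v ≠ p.2)
        = insert i ((S.erase i).filter (fun v => ∀ p ∈ M, v ≠ p.1 ∧ v ≠ p.2)) := by
      ext v
      simp only [mem_filter, mem_insert, mem_erase]
      constructor
      · rintro ⟨hv, hu⟩
        by_cases hvi : v = i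
        · exact Or.inl hvi
        · exact Or.inr ⟨⟨hvi, hv⟩, hu⟩
      · rintro (rfl | ⟨⟨hvi, hv⟩, hu⟩)
        · exact ⟨hi, h.2⟩
        · exact ⟨hv, hu⟩
    have hnotmem : i ∉ (S.erase i).filter (fun v => ∀ p ∈ M, v ≠ p.1 ∧ v ≠ p.2) := by
      simp [Finset.mem_filter]
    rw [hf]
    simp only
    rw [hset, Finset.prod_insert hnotmem]
    ring
  have hpart2 : (∑ M ∈ (univ.filter (fun M => IsMatching n S M)).filter
            (fun M => ¬ ∀ p ∈ M, i ≠ p.1 ∧ i ≠ p.2), f M)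
      = ∑ k ∈ S.erase i, (lam i k : ℂ) * mu n lam x ((S.erase i).erase k) := by
    -- abbreviations
    have hTsub : ∀ k, k ∈ S.erase i → k ∈ S := fun k hk => Finset.mem_of_mem_erase hk
    -- rewrite RHS as a sigma sum
    have hRHS : ∑ k ∈ S.erase i, (lam i k : ℂ) * mu n lam x ((S.erase i).erase k)
        = ∑ a ∈ (S.erase i).sigma (fun k =>
            univ.filter (fun M : Finset (Fin n × Fin n) =>
              IsMatching n (((S.erase i)).erase k) M)),
          (lam i a.1 : ℂ) *
            ((∏ v ∈ (((S.erase i)).erase a.1).filter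
                (fun v => ∀ p ∈ a.2, v ≠ p.1 ∧ v ≠ p.2), x v) *
              ∏ p ∈ a.2, (lam p.1 p.2 : ℂ)) := by
      rw [Finset.sum_sigma]
      refine Finset.sum_congr rfl fun k hk => ?_
      rw [mu, Finset.mul_sum]
    rw [hRHS]
    symm
    refine Finset.sum_bij (fun a _ => insert (pr i a.1) a.2) ?_ ?_ ?_ ?_
    · -- maps into covered matchings
      rintro ⟨k, M⟩ ha
      simp only [Finset.mem_sigma, mem_filter, mem_univ, true_and] at ha
      obtain ⟨hk, hM1, hM2⟩ := ha
      have hki : k ≠ i := Finset.ne_of_mem_erase hk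
      have hkS : k ∈ S := Finset.mem_of_mem_erase hk
      have hMend : ∀ p ∈ M, p.1 ≠ i ∧ p.2 ≠ i ∧ p.1 ≠ k ∧ p.2 ≠ k := by
        intro p hp
        obtain ⟨-, h1, h2⟩ := hM1 p hp
        rw [Finset.mem_erase, Finset.mem_erase] at h1 h2
        exact ⟨h1.2.1, h2.2.1, h1.1, h2.1⟩
      have hMS : ∀ p ∈ M, p.1 ∈ S ∧ p.2 ∈ S := by
        intro p hp
        obtain ⟨-, h1, h2⟩ := hM1 p hp
        exact ⟨Finset.mem_of_mem_erase (Finset.mem_of_mem_erase h1),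
          Finset.mem_of_mem_erase (Finset.mem_of_mem_erase h2)⟩
      have hprS : (pr i k).1 ∈ S ∧ (pr i k).2 ∈ S := by
        rcases pr_cases i k with h | h <;> rw [h] <;> exact ⟨by assumption, by assumption⟩
      have hprend : ((pr i k).1 = i ∨ (pr i k).1 = k) ∧ ((pr i k).2 = i ∨ (pr i k).2 = k) := by
        rcases pr_cases i k with h | h <;> rw [h] <;> simp
      simp only [mem_filter, mem_univ, true_and]
      constructor
      · constructor
        · intro p hp
          rw [Finset.mem_insert] at hp
          rcases hp with rfl | hp
          · exact ⟨pr_lt hki.symm, hprS.1, hprS.2⟩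
          · exact ⟨(hM1 p hp).1, (hMS p hp).1, (hMS p hp).2⟩
        · intro p hp q hq hpq
          rw [Finset.mem_insert] at hp hq
          have key : ∀ r ∈ M, (pr i k).1 ≠ r.1 ∧ (pr i k).1 ≠ r.2 ∧
              (pr i k).2 ≠ r.1 ∧ (pr i k).2 ≠ r.2 := by
            intro r hr
            obtain ⟨e1, e2, e3, e4⟩ := hMend r hr
            rcases pr_cases i k with h | h <;> rw [h]
            · exact ⟨e1.symm, e2.symm, e3.symm, e4.symm⟩
            · exact ⟨e3.symm, e4.symm, e1.symm, e2.symm⟩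
          rcases hp with rfl | hp <;> rcases hq with rfl | hq
          · exact absurd rfl hpq
          · exact key q hq
          · obtain ⟨e1, e2, e3, e4⟩ := key p hp
            exact ⟨e1.symm, e3.symm, e2.symm, e4.symm⟩
          · exact hM2 p hp q hq hpq
      · intro hall
        have := hall (pr i k) (Finset.mem_insert_self _ _)
        rcases pr_cases i k with h | h <;> rw [h] at this
        · exact this.1 rfl
        · exact this.2 rfl
    · -- injectivity
      rintro ⟨k1, M1⟩ ha1 ⟨k2, M2⟩ ha2 heq
      simp only [Finset.mem_sigma, mem_filter, mem_univ, true_and] at ha1 ha2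
      have hk1i : k1 ≠ i := Finset.ne_of_mem_erase ha1.1
      have hk2i : k2 ≠ i := Finset.ne_of_mem_erase ha2.1
      have hnoti : ∀ (k : Fin n) (M : Finset (Fin n × Fin n)),
          IsMatching n ((S.erase i).erase k) M → pr i k ∉ M := by
        intro k M hM hmem
        obtain ⟨-, h1, h2⟩ := hM.1 _ hmem
        rcases pr_cases i k with h | h <;> rw [h] at h1 h2
        · exact (Finset.ne_of_mem_erase (Finset.mem_of_mem_erase h1)) rfl
        · exact (Finset.ne_of_mem_erase (Finset.mem_of_mem_erase h2)) rfl
      have h1 : pr i k1 ∉ M1 := hnoti k1 M1 ha1.2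
      have h2 : pr i k2 ∉ M2 := hnoti k2 M2 ha2.2
      simp only at heq
      have hm : pr i k1 ∈ insert (pr i k2) M2 := by
        rw [← heq]; exact Finset.mem_insert_self _ _
      rw [Finset.mem_insert] at hm
      rcases hm with hm | hm
      · -- pr i k1 = pr i k2 forces k1 = k2
        have hkk : k1 = k2 := by
          rcases pr_cases i k1 with e1 | e1 <;> rcases pr_cases i k2 with e2 | e2 <;>
            rw [e1, e2] at hm <;>
            simp only [Prod.mk.injEq] at hm
          · exact hm.2
          · obtain ⟨ha', hb'⟩ := hm
            exact absurd ha'.symm hk2i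
          · obtain ⟨ha', hb'⟩ := hm
            exact absurd ha' hk1i
          · exact hm.1
        subst hkk
        have : M1 = M2 := by
          have := congrArg (fun s => Finset.erase s (pr i k1)) heq
          simpa [Finset.erase_insert h1, Finset.erase_insert h2] using this
        subst this
        rfl
      · -- pr i k1 ∈ M2 impossible: its endpoint is i
        exfalso
        obtain ⟨-, e1, e2⟩ := ha2.2.1 _ hm
        rcases pr_cases i k1 with h | h <;> rw [h] at e1 e2
        · exact (Finset.ne_of_mem_erase (Finset.mem_of_mem_erase e1)) rfl
        · exact (Finset.ne_of_mem_erase (Finset.mem_of_mem_erase e2)) rfl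
    · -- surjectivity
      intro M hM
      simp only [mem_filter, mem_univ, true_and] at hM
      obtain ⟨hMm, hcov⟩ := hM
      push_neg at hcov
      obtain ⟨p, hp, hip⟩ := hcov
      have hlt := (hMm.1 p hp).1
      have hp1S := (hMm.1 p hp).2.1
      have hp2S := (hMm.1 p hp).2.2
      have herase : ∀ (k : Fin n), (k = p.1 ∨ k = p.2) → (i = p.1 ∨ i = p.2) → i ≠ k →
          IsMatching n ((S.erase i).erase k) (M.erase p) := by
        intro k hk hi2 hik
        constructor
        · intro q hq
          rw [Finset.mem_erase] at hq
          obtain ⟨hqp, hqM⟩ := hq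
          obtain ⟨e1, e2, e3, e4⟩ := hMm.2 q hqM p hp hqp
          refine ⟨(hMm.1 q hqM).1, ?_, ?_⟩ <;> rw [Finset.mem_erase, Finset.mem_erase]
          · refine ⟨?_, ?_, (hMm.1 q hqM).2.1⟩
            · rcases hk with rfl | rfl
              · exact e1
              · exact e2
            · rcases hi2 with h | h <;> rw [h]
              · exact e1
              · exact e2
          · refine ⟨?_, ?_, (hMm.1 q hqM).2.2⟩
            · rcases hk with rfl | rfl
              · exact e3
              · exact e4
            · rcases hi2 with h | h <;> rw [h]
              · exact e3
              · exact e4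
        · intro q hq r hr hqr
          exact hMm.2 q (Finset.mem_of_mem_erase hq) r (Finset.mem_of_mem_erase hr) hqr
      by_cases h1 : i = p.1
      · -- i = p.1, other endpoint k = p.2
        refine ⟨⟨p.2, M.erase p⟩, ?_, ?_⟩
        · simp only [Finset.mem_sigma, mem_filter, mem_univ, true_and]
          constructor
          · rw [Finset.mem_erase]
            exact ⟨by rw [h1]; exact (ne_of_lt hlt).symm, hp2S⟩
          · exact herase p.2 (Or.inr rfl) (Or.inl h1) (by rw [h1]; exact ne_of_lt hlt)
        · simp only
          have hpr : pr i p.2 = p := by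
            unfold pr
            rw [if_pos (h1 ▸ hlt)]
            exact Prod.ext h1 rfl
          rw [hpr, Finset.insert_erase hp]
      · -- i = p.2, other endpoint k = p.1
        have h2 : i = p.2 := hip h1
        refine ⟨⟨p.1, M.erase p⟩, ?_, ?_⟩
        · simp only [Finset.mem_sigma, mem_filter, mem_univ, true_and]
          constructor
          · rw [Finset.mem_erase]
            exact ⟨by rw [h2]; exact ne_of_lt hlt, hp1S⟩
          · exact herase p.1 (Or.inl rfl) (Or.inr h2) (by rw [h2]; exact (ne_of_lt hlt).symm)
        · simp only
          have hpr : pr i p.1 = p := by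
            unfold pr
            rw [if_neg (by rw [h2]; exact not_lt.mpr (le_of_lt hlt))]
            exact Prod.ext rfl h2
          rw [hpr, Finset.insert_erase hp]
    · -- values agree
      rintro ⟨k, M⟩ ha
      simp only [Finset.mem_sigma, mem_filter, mem_univ, true_and] at ha
      obtain ⟨hk, hM⟩ := ha
      have hki : k ≠ i := Finset.ne_of_mem_erase hk
      have hnoti : pr i k ∉ M := by
        intro hmem
        obtain ⟨-, e1, e2⟩ := hM.1 _ hmem
        rcases pr_cases i k with h | h <;> rw [h] at e1 e2
        · exact (Finset.ne_of_mem_erase (Finset.mem_of_mem_erase e1)) rfl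
        · exact (Finset.ne_of_mem_erase (Finset.mem_of_mem_erase e2)) rfl
      rw [hf]
      simp only
      have hsetv : S.filter (fun v => ∀ p ∈ insert (pr i k) M, v ≠ p.1 ∧ v ≠ p.2)
          = ((S.erase i).erase k).filter (fun v => ∀ p ∈ M, v ≠ p.1 ∧ v ≠ p.2) := by
        ext v
        simp only [mem_filter, Finset.forall_mem_insert, Finset.mem_erase]
        constructor
        · rintro ⟨hv, hpr', hu⟩
          have h := pr_ne.mp hpr'
          exact ⟨⟨h.2, h.1, hv⟩, hu⟩
        · rintro ⟨⟨hvk, hvi, hv⟩, hu⟩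
          exact ⟨hv, pr_ne.mpr ⟨hvi, hvk⟩, hu⟩
      rw [hsetv, Finset.prod_insert hnoti, pr_lam lam hsymm i k]
      push_cast
      ring
  rw [hsplit, hpart1, hpart2]

lemma mu_empty (lam : Fin n → Fin n → ℝ) (x : Fin n → ℂ) : mu n lam x ∅ = 1 := by
  have h : (univ.filter (fun M : Finset (Fin n × Fin n) =>
      IsMatching n (∅ : Finset (Fin n)) M)) = {∅} := by
    ext M
    simp only [mem_filter, mem_univ, true_and, mem_singleton]
    constructor
    · rintro ⟨h1, -⟩
      by_contra hne
      obtain ⟨p, hp⟩ := Finset.nonempty_iff_ne_empty.mpr hne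
      exact absurd (h1 p hp).2.1 (by simp)
    · rintro rfl; exact ⟨by simp, by simp⟩
  rw [mu, h]
  simp

lemma graph_cf_key (lam : Fin n → Fin n → ℝ)
    (hsymm : ∀ j k, lam j k = lam k j)
    (hnonneg : ∀ j k, 0 ≤ lam j k)
    (B : ℝ) (hBpos : 0 < B)
    (hrow : ∀ j : Fin n, ∑ k ∈ Finset.univ \ {j}, lam j k ≤ B)
    (x : Fin n → ℂ) (hx : ∀ i, 2 * Real.sqrt B < ‖x i‖) :
    ∀ S : Finset (Fin n), ∀ i ∈ S,
      mu n lam x (S.erase i) ≠ 0 ∧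
      Real.sqrt B < ‖mu n lam x S / mu n lam x (S.erase i)‖ := by
  intro S
  induction S using Finset.strongInduction with
  | _ S ih =>
    intro i hi
    have hsB : 0 < Real.sqrt B := Real.sqrt_pos.mpr hBpos
    set T := S.erase i with hT
    have hTs : T ⊂ S := Finset.erase_ssubset hi
    have hmuT : mu n lam x T ≠ 0 := by
      rcases Finset.eq_empty_or_nonempty T with h | ⟨j, hj⟩
      · rw [h, mu_empty]; exact one_ne_zero
      · obtain ⟨hne, hlt⟩ := ih T hTs j hj
        intro h0
        rw [h0, zero_div, norm_zero] at hlt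
        exact absurd hlt (not_lt.mpr (Real.sqrt_nonneg B))
    refine ⟨hmuT, ?_⟩
    have hratio : ∀ k ∈ T,
        ‖mu n lam x (T.erase k) / mu n lam x T‖ < 1 / Real.sqrt B := by
      intro k hk
      obtain ⟨hne, hlt⟩ := ih T hTs k hk
      have ha : 0 < ‖mu n lam x (T.erase k)‖ := by
        simpa [norm_pos_iff] using hne
      have hb : 0 < ‖mu n lam x T‖ := by
        simpa [norm_pos_iff] using hmuT
      rw [norm_div] at hlt ⊢
      rw [div_lt_div_iff₀ hb hsB]
      rw [lt_div_iff₀ ha] at hlt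
      nlinarith
    have hdiv : mu n lam x S / mu n lam x T
        = x i + ∑ k ∈ T, (lam i k : ℂ) * (mu n lam x (T.erase k) / mu n lam x T) := by
      rw [mu_rec lam hsymm x hi, add_div, mul_div_assoc, div_self hmuT, mul_one,
        Finset.sum_div]
      congr 1
      exact Finset.sum_congr rfl fun k hk => mul_div_assoc _ _ _
    set w : ℂ := ∑ k ∈ T, (lam i k : ℂ) * (mu n lam x (T.erase k) / mu n lam x T) with hw
    have hsum : ∑ k ∈ T, lam i k ≤ B := by
      refine le_trans (Finset.sum_le_sum_of_subset_of_nonneg ?_ fun k _ _ => hnonneg i k) (hrow i)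
      intro k hk
      rw [Finset.mem_sdiff, Finset.mem_singleton]
      exact ⟨Finset.mem_univ _, Finset.ne_of_mem_erase hk⟩
    have hwle : ‖w‖ ≤ Real.sqrt B := by
      calc ‖w‖ ≤ ∑ k ∈ T, ‖(lam i k : ℂ) *
            (mu n lam x (T.erase k) / mu n lam x T)‖ := norm_sum_le _ _
        _ ≤ ∑ k ∈ T, lam i k * (1 / Real.sqrt B) := by
            refine Finset.sum_le_sum fun k hk => ?_
            rw [norm_mul, Complex.norm_real, Real.norm_eq_abs, abs_of_nonneg (hnonneg i k)]
            exact mul_le_mul_of_nonneg_left (le_of_lt (hratio k hk)) (hnonneg i k)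
        _ = (∑ k ∈ T, lam i k) * (1 / Real.sqrt B) := (Finset.sum_mul _ _ _).symm
        _ ≤ B * (1 / Real.sqrt B) := by
            exact mul_le_mul_of_nonneg_right hsum (by positivity)
        _ = Real.sqrt B := by
            rw [mul_one_div, Real.div_sqrt]
    have h3 : ‖x i‖ - ‖w‖ ≤ ‖x i + w‖ := by
      have h := norm_add_le (x i + w) (-w)
      rw [add_neg_cancel_right, norm_neg] at h
      linarith
    rw [hdiv]
    have hxi := hx i
    linarith


/-- Disk inductive invariant: if every weighted row sum `Σ_{k ≠ j} lam j k` is at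
most `B > 0` and `|x i| > 2√B` for every `i`, then for every vertex `i` one has
`μ_{G∖i} ≠ 0` and `|μ_G / μ_{G∖i}| > √B`; in particular `μ_G ≠ 0`. -/
theorem graph_cf_disk (n : ℕ) (hn : 1 ≤ n)
    (lam : Fin n → Fin n → ℝ)
    (hsymm : ∀ j k, lam j k = lam k j)
    (hnonneg : ∀ j k, 0 ≤ lam j k)
    (hdiag : ∀ j, lam j j = 0)
    (B : ℝ) (hBpos : 0 < B)
    (hrow : ∀ j : Fin n, ∑ k ∈ Finset.univ \ {j}, lam j k ≤ B)
    (x : Fin n → ℂ) (hx : ∀ i, 2 * Real.sqrt B < ‖x i‖) :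
    (∀ i : Fin n, mu n lam x (Finset.univ \ {i}) ≠ 0 ∧
      Real.sqrt B < ‖mu n lam x Finset.univ / mu n lam x (Finset.univ \ {i})‖) ∧
    mu n lam x Finset.univ ≠ 0 := by
  have key := graph_cf_key lam hsymm hnonneg B hBpos hrow x hx
  have hmain : ∀ i : Fin n, mu n lam x (Finset.univ \ {i}) ≠ 0 ∧
      Real.sqrt B < ‖mu n lam x Finset.univ / mu n lam x (Finset.univ \ {i})‖ := by
    intro i
    rw [Finset.sdiff_singleton_eq_erase]
    exact key Finset.univ i (Finset.mem_univ i)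
  refine ⟨hmain, ?_⟩
  obtain ⟨hne, hlt⟩ := hmain ⟨0, hn⟩
  intro h0
  rw [h0, zero_div, norm_zero] at hlt
  exact absurd hlt (not_lt.mpr (Real.sqrt_nonneg B))
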